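/- For |q|<1, the Euler product E(q) = ∏_{n≥1}(1-q^n) satisfies the pentagonal number theorem: E(q) = ∑_{n∈ℤ} (-1)^n q^{n(3n-1)/2}. -/

import Mathlib

open scoped BigOperators

noncomputable def E (q : ℂ) : ℂ := ∏' n : ℕ, (1 - q ^ (n + 1))

noncomputable def ramaf (a b : ℂ) : ℂ :=
  ∑' n : ℤ, a ^ (n * (n + 1) / 2) * b ^ (n * (n - 1) / 2)

noncomputable def phi (q : ℂ) : ℂ := ∑' n : ℤ, q ^ (n ^ 2)

noncomputable def psi (q : ℂ) : ℂ := ∑' n : ℤ, q ^ (2 * n ^ 2 - n)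

open Finset Filter Topology

namespace PentAux

noncomputable def Pp (q : ℂ) (m : ℕ) : ℂ := ∏ k ∈ Finset.range m, (1 - q ^ (k+1))

noncomputable def Bb (q : ℂ) (n m : ℕ) : ℂ :=
  if m ≤ n then Pp q n / (Pp q m * Pp q (n-m)) else 0

def tt (m : ℕ) : ℕ := ∑ i ∈ Finset.range m, (i+1)

def pe (j : ℤ) : ℤ := j * (3*j+1) / 2

noncomputable def Kq (q : ℂ) : ℝ := Real.exp (∑' k : ℕ, ‖q‖^(k+1))

noncomputable def del (q : ℂ) : ℝ := ∏' k : ℕ, (1 - ‖q‖^(k+1))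

lemma Pp_zero (q : ℂ) : Pp q 0 = 1 := by simp [Pp]

lemma Pp_succ (q : ℂ) (m : ℕ) : Pp q (m+1) = Pp q m * (1 - q ^ (m+1)) := by
  simp [Pp, Finset.prod_range_succ]

lemma Pp_ne_zero {q : ℂ} (hq : ‖q‖ < 1) (m : ℕ) : Pp q m ≠ 0 := by
  refine Finset.prod_ne_zero_iff.mpr fun k _ => ?_
  intro h
  have h1 : q ^ (k+1) = 1 := by linear_combination -h
  have : ‖q ^ (k+1)‖ < 1 := by
    rw [norm_pow]
    exact pow_lt_one₀ (norm_nonneg q) hq (Nat.succ_ne_zero k)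
  rw [h1] at this; simp at this

lemma Bb_self (q : ℂ) {n : ℕ} (h : Pp q n ≠ 0) : Bb q n n = 1 := by
  rw [Bb, if_pos le_rfl, Nat.sub_self, Pp_zero, mul_one, div_self h]

lemma Bb_zero (q : ℂ) {n : ℕ} (h : Pp q n ≠ 0) : Bb q n 0 = 1 := by
  rw [Bb, if_pos (Nat.zero_le n), Pp_zero, Nat.sub_zero, one_mul, div_self h]

lemma pascal (q : ℂ) (hP : ∀ m, Pp q m ≠ 0) (n m : ℕ) :
    Bb q (n+1) (m+1) = Bb q n (m+1) + q^(n-m) * Bb q n m := by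
  rcases lt_trichotomy m n with h | rfl | h
  · -- m+1 ≤ n
    have h1 : m + 1 ≤ n := h
    rw [Bb, if_pos (by omega), Bb, if_pos h1, Bb, if_pos (by omega)]
    have e1 : n + 1 - (m+1) = (n - (m+1)) + 1 := by omega
    have e2 : n - m = (n - (m+1)) + 1 := by omega
    rw [e1, e2, Pp_succ, Pp_succ, Pp_succ]
    have hne1 : Pp q m ≠ 0 := hP m
    have hne3 : Pp q (n - (m+1)) ≠ 0 := hP _
    have hX : (1:ℂ) - q ^ (m+1) ≠ 0 := by
      have := hP (m+1); rw [Pp_succ] at this; exact right_ne_zero_of_mul this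
    have hY : (1:ℂ) - q ^ (n - (m+1) + 1) ≠ 0 := by
      have := hP (n - (m+1) + 1); rw [Pp_succ] at this
      exact right_ne_zero_of_mul this
    have e4 : (q ^ (m+1)) * q ^ (n - (m+1) + 1) = q ^ (n+1) := by
      rw [← pow_add]; congr 1; omega
    generalize Pp q m = a at *
    generalize Pp q (n - (m+1)) = b at *
    generalize Pp q n = c at *
    generalize hXg : q ^ (m+1) = X at *
    generalize q ^ (n - (m+1) + 1) = Y at *
    rw [← e4]
    field_simp
    ring
  · -- m = n
    rw [Bb, if_pos le_rfl, Bb, if_neg (by omega), Bb, if_pos le_rfl, Nat.sub_self]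
    rw [Nat.sub_self, Pp_zero]
    rw [mul_one, mul_one, div_self (hP (m+1)), div_self (hP m)]
    simp
  · rw [Bb, if_neg (by omega), Bb, if_neg (by omega), Bb, if_neg (by omega)]
    ring

lemma Bb_of_gt (q : ℂ) {n m : ℕ} (h : n < m) : Bb q n m = 0 := by
  rw [Bb, if_neg (by omega)]

lemma tt_succ (m : ℕ) : tt (m+1) = tt m + (m+1) := by
  simp [tt, Finset.sum_range_succ]

lemma cauchy (Q : ℂ) (hP : ∀ m, Pp Q m ≠ 0) (N : ℕ) (z : ℂ) :
    ∏ k ∈ Finset.range N, (1 + z * Q^(k+1))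
      = ∑ m ∈ Finset.range (N+1), Bb Q N m * Q^(tt m) * z^m := by
  induction N generalizing z with
  | zero => simp [tt, Bb_zero Q (hP 0)]
  | succ N ih =>
    rw [Finset.prod_range_succ, ih]
    rw [Finset.sum_range_succ' (fun m => Bb Q (N+1) m * Q^(tt m) * z^m) (N+1)]
    have h0 : Bb Q (N+1) 0 * Q^(tt 0) * z^0 = 1 := by
      simp [tt, Bb_zero Q (hP (N+1))]
    rw [h0]
    have hsplit : ∀ m ∈ Finset.range (N+1),
        Bb Q (N+1) (m+1) * Q^(tt (m+1)) * z^(m+1)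
          = Bb Q N (m+1) * Q^(tt (m+1)) * z^(m+1)
            + (z * Q^(N+1)) * (Bb Q N m * Q^(tt m) * z^m) := by
      intro m hm
      rw [Finset.mem_range] at hm
      rw [pascal Q hP N m, tt_succ]
      have : Q^(N-m) * Q^(tt m + (m+1)) = Q^(tt m) * Q^(N+1) := by
        rw [← pow_add, ← pow_add]; congr 1; omega
      ring_nf
      ring_nf at this
      linear_combination z * z^m * Bb Q N m * this
    rw [Finset.sum_congr rfl hsplit, Finset.sum_add_distrib, ← Finset.mul_sum]
    have hre : ∑ m ∈ Finset.range (N+1), Bb Q N (m+1) * Q^(tt (m+1)) * z^(m+1)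
        = ∑ m ∈ Finset.range (N+1), Bb Q N m * Q^(tt m) * z^m - 1 := by
      have := Finset.sum_range_succ' (fun m => Bb Q N m * Q^(tt m) * z^m) (N+1)
      rw [Finset.sum_range_succ (fun m => Bb Q N m * Q^(tt m) * z^m) (N+1)] at this
      rw [Bb_of_gt Q (by omega)] at this
      have h0' : Bb Q N 0 * Q^(tt 0) * z^0 = 1 := by simp [tt, Bb_zero Q (hP N)]
      rw [h0'] at this
      simp only [zero_mul, add_zero] at this
      linear_combination -this
    rw [hre]
    ring

lemma two_pe (j : ℤ) : 2 * pe j = j * (3*j+1) := by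
  rw [pe, Int.mul_ediv_cancel']
  rcases Int.even_or_odd j with ⟨k, hk⟩ | ⟨k, hk⟩
  · exact ⟨k * (3*j+1), by rw [hk]; ring⟩
  · exact ⟨j * (3*k+2), by rw [hk]; ring⟩

lemma pe_nonneg (j : ℤ) : 0 ≤ pe j := by
  have h := two_pe j
  nlinarith [sq_nonneg j, sq_nonneg (j+1)]

lemma natAbs_le_pe (j : ℤ) : (j.natAbs : ℤ) ≤ pe j := by
  have h := two_pe j
  rcases le_or_gt 0 j with hj | hj
  · rw [Int.natAbs_of_nonneg hj]
    rcases eq_or_lt_of_le hj with h0 | h1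
    · simp [← h0, pe]
    · nlinarith [mul_nonneg hj (by omega : (0:ℤ) ≤ 3*j - 1)]
  · rw [Int.ofNat_natAbs_of_nonpos hj.le]
    nlinarith [mul_nonneg (by omega : (0:ℤ) ≤ -j) (by omega : (0:ℤ) ≤ -3*j - 1)]

lemma two_tt (m : ℕ) : 2 * (tt m : ℤ) = m * (m+1) := by
  induction m with
  | zero => simp [tt]
  | succ m ih =>
    rw [tt, Finset.sum_range_succ, ← tt]
    push_cast
    push_cast at ih
    linear_combination ih

lemma two_S1 (n : ℕ) : 2 * ((∑ k ∈ Finset.range n, (3*k+3) : ℕ) : ℤ) = 3*n*n + 3*n := by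
  induction n with
  | zero => simp
  | succ n ih =>
    rw [Finset.sum_range_succ]
    push_cast
    push_cast at ih
    linear_combination ih

lemma prodsplit (q : ℂ) (n : ℕ) :
    (∏ k ∈ Finset.range (3*n), (1 - q ^ (k+1)))
      = (∏ k ∈ Finset.range n, (1 - q ^ (3*k+1))) * (∏ k ∈ Finset.range n, (1 - q ^ (3*k+2)))
        * (∏ k ∈ Finset.range n, (1 - q ^ (3*k+3))) := by
  induction n with
  | zero => simp
  | succ n ih =>
    have h3 : 3 * (n+1) = (3*n) + 1 + 1 + 1 := by ring
    rw [h3, Finset.prod_range_succ, Finset.prod_range_succ, Finset.prod_range_succ,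
      Finset.prod_range_succ, Finset.prod_range_succ, Finset.prod_range_succ, ih]
    have e1 : 3*n+1+1 = 3*n+2 := by omega
    have e2 : 3*n+1+1+1 = 3*n+3 := by omega
    rw [e1, e2]
    ring

lemma reflect1 (q : ℂ) (n : ℕ) :
    (∏ k ∈ Finset.range n, (1 - q ^ (3*n-3*k-2))) = ∏ k ∈ Finset.range n, (1 - q ^ (3*k+1)) := by
  rw [← Finset.prod_range_reflect (fun k => 1 - q ^ (3*k+1)) n]
  refine Finset.prod_congr rfl fun k hk => ?_
  rw [Finset.mem_range] at hk
  have e : 3*n-3*k-2 = 3*(n-1-k)+1 := by omega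
  rw [e]

lemma starId (q : ℂ) (hq0 : q ≠ 0) (hP3 : ∀ m, Pp (q^3) m ≠ 0) (n : ℕ) :
    Pp q (3*n) = ∑ m ∈ Finset.range (2*n+1),
      (-1:ℂ)^(m+n) * (Pp (q^3) n * Bb (q^3) (2*n) m) * q ^ (pe ((m:ℤ) - n)) := by
  set S1 : ℕ := ∑ k ∈ Finset.range n, (3*k+3) with hS1
  set E : ℕ := S1 + (3*n+1)*n with hE
  have hw : q^(3*n+1) ≠ 0 := pow_ne_zero _ hq0
  -- Step A : the "diamond" identity
  have hD : ∏ k ∈ Finset.range (2*n), (q^(3*n+1) - q^(3*k+3))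
      = ∑ m ∈ Finset.range (2*n+1),
          (-1:ℂ)^m * Bb (q^3) (2*n) m * q^(3*tt m + (3*n+1)*(2*n-m)) := by
    have hC := cauchy (q^3) hP3 (2*n) (-(q^(3*n+1))⁻¹)
    calc ∏ k ∈ Finset.range (2*n), (q^(3*n+1) - q^(3*k+3))
        = ∏ k ∈ Finset.range (2*n),
            (q^(3*n+1) * (1 + (-(q^(3*n+1))⁻¹) * (q^3)^(k+1))) := by
          refine Finset.prod_congr rfl fun k _ => ?_
          have e : ((q:ℂ)^3)^(k+1) = q^(3*k+3) := by
            rw [show 3*k+3 = 3*(k+1) from by omega, pow_mul]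
          rw [e]
          linear_combination q^(3*k+3) * mul_inv_cancel₀ hw
      _ = (q^(3*n+1))^(2*n)
            * ∏ k ∈ Finset.range (2*n), (1 + (-(q^(3*n+1))⁻¹) * (q^3)^(k+1)) := by
          rw [Finset.prod_mul_distrib, Finset.prod_const, Finset.card_range]
      _ = (q^(3*n+1))^(2*n) * ∑ m ∈ Finset.range (2*n+1),
            Bb (q^3) (2*n) m * (q^3)^(tt m) * (-(q^(3*n+1))⁻¹)^m := by rw [hC]
      _ = ∑ m ∈ Finset.range (2*n+1),
            (-1:ℂ)^m * Bb (q^3) (2*n) m * q^(3*tt m + (3*n+1)*(2*n-m)) := by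
          rw [Finset.mul_sum]
          refine Finset.sum_congr rfl fun m hm => ?_
          rw [Finset.mem_range] at hm
          have hmle : m ≤ 2*n := by omega
          have e1 : ((q:ℂ)^3)^(tt m) = q^(3*tt m) := by rw [← pow_mul]
          have e3 : (q^(3*n+1))^(2*n) = q^((3*n+1)*m) * q^((3*n+1)*(2*n-m)) := by
            rw [← pow_mul, ← pow_add]; congr 1
            have : (3*n+1)*m + (3*n+1)*(2*n-m) = (3*n+1)*(m + (2*n-m)) := by
              rw [Nat.mul_add]
            rw [this]; congr 1; omega
          have e5 : (-(q^(3*n+1))⁻¹)^m = (-1:ℂ)^m * (q^((3*n+1)*m))⁻¹ := by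
            rw [neg_pow, inv_pow, ← pow_mul]
          have e4 : (q^((3*n+1)*m))⁻¹ * q^((3*n+1)*m) = 1 :=
            inv_mul_cancel₀ (pow_ne_zero _ hq0)
          rw [e5, e1, e3, pow_add]
          linear_combination ((-1:ℂ))^m * Bb (q^3) (2*n) m * q^(3*tt m)
            * q^((3*n+1)*(2*n-m)) * e4
  -- Step B : factor the left side
  have hB : ∏ k ∈ Finset.range (2*n), (q^(3*n+1) - q^(3*k+3))
      = (-1:ℂ)^n * q^E *
        ((∏ k ∈ Finset.range n, (1 - q ^ (3*k+1))) * (∏ k ∈ Finset.range n, (1 - q ^ (3*k+2)))) := by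
    have h2n : 2*n = n + n := by omega
    rw [h2n, Finset.prod_range_add]
    have hfst : ∏ k ∈ Finset.range n, (q^(3*n+1) - q^(3*k+3))
        = (-1:ℂ)^n * q^S1 * ∏ k ∈ Finset.range n, (1 - q ^ (3*k+1)) := by
      have : ∀ k ∈ Finset.range n, q^(3*n+1) - q^(3*k+3)
          = ((-1:ℂ) * q^(3*k+3)) * (1 - q^(3*n-3*k-2)) := by
        intro k hk
        rw [Finset.mem_range] at hk
        have e : (q:ℂ)^(3*k+3) * q^(3*n-3*k-2) = q^(3*n+1) := by
          rw [← pow_add, show 3*k+3+(3*n-3*k-2) = 3*n+1 from by omega]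
        linear_combination -e
      rw [Finset.prod_congr rfl this, Finset.prod_mul_distrib, Finset.prod_mul_distrib,
        Finset.prod_const, Finset.card_range, Finset.prod_pow_eq_pow_sum, reflect1, hS1]
    have hsnd : ∏ k ∈ Finset.range n, (q^(3*n+1) - q^(3*(n+k)+3))
        = q^((3*n+1)*n) * ∏ k ∈ Finset.range n, (1 - q ^ (3*k+2)) := by
      have : ∀ k ∈ Finset.range n, q^(3*n+1) - q^(3*(n+k)+3)
          = q^(3*n+1) * (1 - q^(3*k+2)) := by
        intro k _
        have e : (q:ℂ)^(3*n+1) * q^(3*k+2) = q^(3*(n+k)+3) := by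
          rw [← pow_add, show 3*n+1+(3*k+2) = 3*(n+k)+3 from by omega]
        linear_combination -e
      rw [Finset.prod_congr rfl this, Finset.prod_mul_distrib, Finset.prod_const,
        Finset.card_range, ← pow_mul]
    rw [hfst, hsnd, hE, pow_add]
    ring
  -- Step C : rewrite exponents on the right of hD
  have hC2 : ∀ m ∈ Finset.range (2*n+1),
      (-1:ℂ)^m * Bb (q^3) (2*n) m * q^(3*tt m + (3*n+1)*(2*n-m))
        = q^E * ((-1:ℂ)^m * Bb (q^3) (2*n) m * q ^ (pe ((m:ℤ)-n))) := by
    intro m hm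
    rw [Finset.mem_range] at hm
    have hmle : m ≤ 2*n := by omega
    have key : ((3*tt m + (3*n+1)*(2*n-m) : ℕ) : ℤ) = ((E:ℕ) : ℤ) + pe ((m:ℤ)-n) := by
      have h1 := two_tt m
      have h2 := two_S1 n
      rw [← hS1] at h2
      have h3 := two_pe ((m:ℤ)-n)
      have hcast : ((2*n-m : ℕ) : ℤ) = 2*(n:ℤ) - m := by
        push_cast [Nat.cast_sub hmle]; ring
      have H2 : 2 * ((3*tt m + (3*n+1)*(2*n-m) : ℕ) : ℤ)
          = 2 * (((E:ℕ) : ℤ) + pe ((m:ℤ)-n)) := by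
        rw [hE]
        push_cast [hcast]
        linear_combination 3*h1 - h2 - h3
      linarith
    have epow : (q:ℂ)^(3*tt m + (3*n+1)*(2*n-m)) = q ^ (E:ℕ) * q ^ (pe ((m:ℤ)-n)) := by
      calc (q:ℂ)^(3*tt m + (3*n+1)*(2*n-m))
          = q ^ ((3*tt m + (3*n+1)*(2*n-m) : ℕ) : ℤ) := by rw [zpow_natCast]
        _ = q ^ (((E:ℕ) : ℤ) + pe ((m:ℤ)-n)) := by rw [key]
        _ = q ^ (E:ℕ) * q ^ (pe ((m:ℤ)-n)) := by
            rw [zpow_add₀ hq0, zpow_natCast]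
    rw [epow]
    ring
  -- Step D : assemble
  set P1 : ℂ := ∏ k ∈ Finset.range n, (1 - q ^ (3*k+1)) with hP1
  set P2 : ℂ := ∏ k ∈ Finset.range n, (1 - q ^ (3*k+2)) with hP2
  rw [Finset.sum_congr rfl hC2, ← Finset.mul_sum] at hD
  rw [hB] at hD
  have hqE : (q:ℂ)^E ≠ 0 := pow_ne_zero _ hq0
  have hcan : (-1:ℂ)^n * (P1 * P2)
      = ∑ m ∈ Finset.range (2*n+1), (-1:ℂ)^m * Bb (q^3) (2*n) m * q ^ (pe ((m:ℤ)-n)) := by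
    apply mul_left_cancel₀ hqE
    linear_combination hD
  have hnn : ((-1:ℂ)^n) * ((-1:ℂ)^n) = 1 := by
    rw [← mul_pow]; norm_num
  have h2 : P1 * P2 = (-1:ℂ)^n
      * ∑ m ∈ Finset.range (2*n+1), (-1:ℂ)^m * Bb (q^3) (2*n) m * q ^ (pe ((m:ℤ)-n)) := by
    linear_combination ((-1:ℂ)^n) * hcan - (P1 * P2) * hnn
  have hPp3 : Pp (q^3) n = ∏ k ∈ Finset.range n, (1 - q ^ (3*k+3)) := by
    refine Finset.prod_congr rfl fun k _ => ?_
    rw [show 3*k+3 = 3*(k+1) from by omega, pow_mul]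
  have hsplit : Pp q (3*n) = P1 * P2 * Pp (q^3) n := by
    rw [Pp, prodsplit q n, hPp3, hP1, hP2]
  rw [hsplit, h2, Finset.mul_sum, Finset.sum_mul]
  refine Finset.sum_congr rfl fun m hm => ?_
  rw [pow_add]
  ring

lemma summable_log {q : ℂ} (hq : ‖q‖ < 1) :
    Summable (fun n : ℕ => Complex.log (1 - q^(n+1))) := by
  apply Summable.of_norm_bounded_eventually_nat (g := fun n => (3/2) * ‖q‖^(n+1))
  · exact (summable_geometric_of_lt_one (norm_nonneg q) hq).mul_left _ |>.comp_injective
      (add_left_injective 1)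
  · have h0 : Tendsto (fun n : ℕ => ‖q‖^(n+1)) atTop (𝓝 0) := by
      exact (tendsto_pow_atTop_nhds_zero_of_lt_one (norm_nonneg q) hq).comp
        (tendsto_add_atTop_nat 1)
    filter_upwards [h0.eventually_le_const (by norm_num : (0:ℝ) < 1/2)] with n hn
    have : (1:ℂ) - q^(n+1) = 1 + (-(q^(n+1))) := by ring
    rw [this]
    have := Complex.norm_log_one_add_half_le_self (z := -(q^(n+1)))
      (by rw [norm_neg, norm_pow]; exact hn)
    simpa [norm_pow] using this

lemma multipliable {q : ℂ} (hq : ‖q‖ < 1) :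
    Multipliable (fun n : ℕ => 1 - q^(n+1)) := by
  have h1 : ∀ n : ℕ, (1 : ℂ) - q^(n+1) ≠ 0 := by
    intro n h
    have h1 : q ^ (n+1) = 1 := by linear_combination -h
    have : ‖q ^ (n+1)‖ < 1 := by
      rw [norm_pow]; exact pow_lt_one₀ (norm_nonneg q) hq (Nat.succ_ne_zero n)
    rw [h1] at this; simp at this
  exact Complex.multipliable_of_summable_log (summable_log hq)

lemma tendsto_Pp {q : ℂ} (hq : ‖q‖ < 1) :
    Tendsto (fun m => Pp q m) atTop (𝓝 (∏' n : ℕ, (1 - q^(n+1)))) :=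
  (multipliable hq).hasProd.tendsto_prod_nat

lemma tprod_ne_zero {q : ℂ} (hq : ‖q‖ < 1) : (∏' n : ℕ, (1 - q^(n+1))) ≠ 0 := by
  have h1 : ∀ n : ℕ, (1 : ℂ) - q^(n+1) ≠ 0 := by
    intro n h
    have h1 : q ^ (n+1) = 1 := by linear_combination -h
    have : ‖q ^ (n+1)‖ < 1 := by
      rw [norm_pow]; exact pow_lt_one₀ (norm_nonneg q) hq (Nat.succ_ne_zero n)
    rw [h1] at this; simp at this
  have h2 : Complex.exp (∑' n : ℕ, Complex.log (1 - q^(n+1))) = ∏' n : ℕ, (1 - q^(n+1)) :=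
    Complex.cexp_tsum_eq_tprod h1 (summable_log hq)
  rw [← h2]
  exact Complex.exp_ne_zero _

lemma summable_pow {q : ℂ} (hq : ‖q‖ < 1) : Summable (fun k : ℕ => ‖q‖^(k+1)) :=
  (summable_geometric_of_lt_one (norm_nonneg q) hq).comp_injective (add_left_injective 1)

lemma rsummable_log {q : ℂ} (hq : ‖q‖ < 1) :
    Summable (fun n : ℕ => Real.log (1 - ‖q‖^(n+1))) := by
  have h1 : ‖(‖q‖ : ℂ)‖ < 1 := by rwa [Complex.norm_real, Real.norm_eq_abs, abs_norm]
  have h2 := ((summable_log h1).hasSum.mapL Complex.reCLM).summable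
  refine h2.congr fun n => ?_
  show (Complex.log (1 - (‖q‖:ℂ)^(n+1))).re = _
  have e : (1 : ℂ) - (‖q‖:ℂ)^(n+1) = ((1 - ‖q‖^(n+1) : ℝ) : ℂ) := by push_cast; ring
  rw [e, Complex.log_ofReal_re]

lemma factor_pos {q : ℂ} (hq : ‖q‖ < 1) (k : ℕ) : 0 < 1 - ‖q‖^(k+1) := by
  have : ‖q‖^(k+1) < 1 := pow_lt_one₀ (norm_nonneg q) hq (Nat.succ_ne_zero k)
  linarith

lemma rmultipliable {q : ℂ} (hq : ‖q‖ < 1) :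
    Multipliable (fun n : ℕ => 1 - ‖q‖^(n+1)) :=
  Real.multipliable_of_summable_log (fun n => factor_pos hq n) (rsummable_log hq)

lemma del_pos {q : ℂ} (hq : ‖q‖ < 1) : 0 < del q := by
  have h2 : Real.exp (∑' n : ℕ, Real.log (1 - ‖q‖^(n+1))) = ∏' n : ℕ, (1 - ‖q‖^(n+1)) :=
    Real.rexp_tsum_eq_tprod (fun n => factor_pos hq n) (rsummable_log hq)
  rw [del, ← h2]
  exact Real.exp_pos _

lemma del_le {q : ℂ} (hq : ‖q‖ < 1) (m : ℕ) :
    del q ≤ ∏ k ∈ Finset.range m, (1 - ‖q‖^(k+1)) := by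
  have htend : Tendsto (fun m => ∏ k ∈ Finset.range m, (1 - ‖q‖^(k+1))) atTop (𝓝 (del q)) :=
    (rmultipliable hq).hasProd.tendsto_prod_nat
  refine le_of_tendsto htend ?_
  filter_upwards [eventually_ge_atTop m] with n hn
  have : ∏ k ∈ Finset.range n, (1 - ‖q‖^(k+1))
      ≤ ∏ k ∈ Finset.range m, (1 - ‖q‖^(k+1)) := by
    rw [show n = m + (n - m) by omega, Finset.prod_range_add]
    have hle1 : ∏ k ∈ Finset.range (n-m), (1 - ‖q‖^((m+k)+1)) ≤ 1 := by
      refine Finset.prod_le_one (fun k _ => (factor_pos hq (m+k)).le) fun k _ => ?_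
      have : 0 ≤ ‖q‖^((m+k)+1) := pow_nonneg (norm_nonneg q) _
      linarith
    have hnn : 0 ≤ ∏ k ∈ Finset.range m, (1 - ‖q‖^(k+1)) :=
      Finset.prod_nonneg fun k _ => (factor_pos hq k).le
    nlinarith [Finset.prod_nonneg (fun k (_ : k ∈ Finset.range (n-m)) => (factor_pos hq (m+k)).le)]
  exact this

lemma Pp_norm_lower {q : ℂ} (hq : ‖q‖ < 1) (m : ℕ) : del q ≤ ‖Pp q m‖ := by
  refine le_trans (del_le hq m) ?_
  rw [Pp, norm_prod]
  refine Finset.prod_le_prod (fun k _ => (factor_pos hq k).le) fun k _ => ?_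
  calc 1 - ‖q‖^(k+1) = ‖(1:ℂ)‖ - ‖q^(k+1)‖ := by simp [norm_pow]
    _ ≤ ‖(1:ℂ) - q^(k+1)‖ := norm_sub_norm_le _ _

lemma Pp_norm_upper {q : ℂ} (hq : ‖q‖ < 1) (m : ℕ) : ‖Pp q m‖ ≤ Kq q := by
  rw [Pp, norm_prod]
  calc ∏ k ∈ Finset.range m, ‖(1:ℂ) - q^(k+1)‖
      ≤ ∏ k ∈ Finset.range m, Real.exp (‖q‖^(k+1)) := by
        refine Finset.prod_le_prod (fun k _ => norm_nonneg _) fun k _ => ?_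
        calc ‖(1:ℂ) - q^(k+1)‖ ≤ ‖(1:ℂ)‖ + ‖q^(k+1)‖ := norm_sub_le _ _
          _ = ‖q‖^(k+1) + 1 := by simp [norm_pow]; ring
          _ ≤ Real.exp (‖q‖^(k+1)) := Real.add_one_le_exp _
    _ = Real.exp (∑ k ∈ Finset.range m, ‖q‖^(k+1)) := by rw [Real.exp_sum]
    _ ≤ Kq q := by
        rw [Kq, Real.exp_le_exp]
        exact Summable.sum_le_tsum _ (fun k _ => pow_nonneg (norm_nonneg q) _) (summable_pow hq)

lemma coef_bound {Q : ℂ} (hQ : ‖Q‖ < 1) (a N m : ℕ) :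
    ‖Pp Q a * Bb Q N m‖ ≤ (Kq Q)^2 / (del Q)^2 := by
  have hKpos : 0 < Kq Q := Real.exp_pos _
  have hdpos : 0 < del Q := del_pos hQ
  by_cases hm : m ≤ N
  · rw [Bb, if_pos hm]
    rw [norm_mul, norm_div, norm_mul, mul_div_assoc']
    rw [div_le_div_iff₀ (mul_pos (lt_of_lt_of_le hdpos (Pp_norm_lower hQ m))
      (lt_of_lt_of_le hdpos (Pp_norm_lower hQ (N-m)))) (by positivity)]
    have h1 : ‖Pp Q a‖ * ‖Pp Q N‖ ≤ (Kq Q)^2 := by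
      calc ‖Pp Q a‖ * ‖Pp Q N‖ ≤ Kq Q * Kq Q :=
            mul_le_mul (Pp_norm_upper hQ a) (Pp_norm_upper hQ N) (norm_nonneg _) hKpos.le
        _ = (Kq Q)^2 := (sq (Kq Q)).symm
    have h2 : (del Q)^2 ≤ ‖Pp Q m‖ * ‖Pp Q (N-m)‖ := by
      calc (del Q)^2 = del Q * del Q := sq (del Q)
        _ ≤ ‖Pp Q m‖ * ‖Pp Q (N-m)‖ :=
            mul_le_mul (Pp_norm_lower hQ m) (Pp_norm_lower hQ (N-m)) hdpos.le (norm_nonneg _)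
    calc ‖Pp Q a‖ * ‖Pp Q N‖ * (del Q)^2 ≤ (Kq Q)^2 * (del Q)^2 := by nlinarith [norm_nonneg (Pp Q a), norm_nonneg (Pp Q N)]
      _ ≤ (Kq Q)^2 * (‖Pp Q m‖ * ‖Pp Q (N-m)‖) := by nlinarith
  · rw [Bb, if_neg hm]
    simp
    positivity

lemma coef_tendsto {Q : ℂ} (hQ : ‖Q‖ < 1) (j : ℤ) :
    Tendsto (fun n : ℕ => Pp Q n * Bb Q (2*n) ((j + n).toNat)) atTop (𝓝 1) := by
  set L : ℂ := ∏' k : ℕ, (1 - Q^(k+1)) with hL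
  have hLne : L ≠ 0 := tprod_ne_zero hQ
  have hPp := tendsto_Pp hQ
  have t2 : Tendsto (fun n : ℕ => 2*n) atTop atTop :=
    tendsto_atTop.2 fun b => eventually_atTop.2 ⟨b, fun n hn => by omega⟩
  have tp : Tendsto (fun n : ℕ => (j + n).toNat) atTop atTop :=
    tendsto_atTop.2 fun b => eventually_atTop.2 ⟨b + j.natAbs, fun n hn => by omega⟩
  have tm : Tendsto (fun n : ℕ => ((n:ℤ) - j).toNat) atTop atTop :=
    tendsto_atTop.2 fun b => eventually_atTop.2 ⟨b + j.natAbs, fun n hn => by omega⟩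
  have main : Tendsto (fun n : ℕ =>
      Pp Q n * Pp Q (2*n) / (Pp Q ((j+n).toNat) * Pp Q (((n:ℤ)-j).toNat)))
      atTop (𝓝 (L * L / (L * L))) :=
    Tendsto.div (hPp.mul (hPp.comp t2)) ((hPp.comp tp).mul (hPp.comp tm))
      (mul_ne_zero hLne hLne)
  rw [div_self (mul_ne_zero hLne hLne)] at main
  refine main.congr' ?_
  filter_upwards [eventually_ge_atTop j.natAbs] with n hn
  have hm1 : (j + n).toNat ≤ 2*n := by omega
  have hm2 : 2*n - (j+n).toNat = ((n:ℤ) - j).toNat := by omega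
  rw [Bb, if_pos hm1, hm2, mul_div_assoc']


end PentAux

open PentAux

theorem pentagonal_number_theorem (q : ℂ) (hq : ‖q‖ < 1) :
    E q = ∑' n : ℤ, (-1 : ℂ) ^ n * q ^ (n * (3 * n - 1) / 2) := by
  by_cases hq0 : q = 0
  · subst hq0
    have hE : E 0 = 1 := by
      rw [E]
      have : ∀ n : ℕ, (1 : ℂ) - 0^(n+1) = 1 := by
        intro n; rw [zero_pow (Nat.succ_ne_zero n), sub_zero]
      rw [tprod_congr this, tprod_one]
    rw [hE, tsum_eq_single 0 ?_]
    · norm_num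
    · intro b hb
      have h1 : b*(3*b-1)/2 = pe (-b) := by rw [pe]; congr 1; ring
      have h2 := natAbs_le_pe (-b)
      have h3 : b*(3*b-1)/2 ≠ 0 := by omega
      rw [zero_zpow _ h3, mul_zero]
  · -- main case
    have hq3 : ‖q^3‖ < 1 := by
      rw [norm_pow]; exact pow_lt_one₀ (norm_nonneg q) hq (by norm_num)
    have hP3 : ∀ m, Pp (q^3) m ≠ 0 := Pp_ne_zero hq3
    have hqpos : 0 < ‖q‖ := norm_pos_iff.mpr hq0
    set C : ℝ := (Kq (q^3))^2 / (del (q^3))^2 with hC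
    have hCpos : 0 < C := by
      rw [hC]
      have := del_pos hq3
      have : (0:ℝ) < Kq (q^3) := Real.exp_pos _
      positivity
    set F : ℕ → ℤ → ℂ := fun n j =>
      if j.natAbs ≤ n then
        (-1:ℂ)^j * (Pp (q^3) n * Bb (q^3) (2*n) ((j+n).toNat)) * q^(pe j)
      else 0 with hF
    set g : ℤ → ℂ := fun j => (-1:ℂ)^j * q^(pe j) with hg
    have hsign : ∀ (j : ℤ) (n : ℕ), j.natAbs ≤ n →
        ((-1:ℂ))^((j+n).toNat + n) = ((-1:ℂ))^j := by
      intro j n hjn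
      have h2 : (((j+n).toNat + n : ℕ) : ℤ) = j + 2*(n:ℤ) := by omega
      calc ((-1:ℂ))^((j+n).toNat + n)
          = ((-1:ℂ))^((((j+n).toNat + n : ℕ)) : ℤ) := (zpow_natCast _ _).symm
        _ = ((-1:ℂ))^(j + 2*(n:ℤ)) := by rw [h2]
        _ = ((-1:ℂ))^j * (((-1:ℂ))^(2:ℤ))^((n:ℤ)) := by
            rw [zpow_add₀ (by norm_num : (-1:ℂ) ≠ 0), zpow_mul]
        _ = ((-1:ℂ))^j := by norm_num
    have h1 : ∀ n : ℕ, ∑' j : ℤ, F n j = Pp q (3*n) := by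
      intro n
      rw [tsum_eq_sum (s := Finset.Icc (-(n:ℤ)) (n:ℤ)) ?_]
      swap
      · intro j hj
        rw [Finset.mem_Icc] at hj
        rw [hF]
        simp only
        rw [if_neg (by omega)]
      rw [starId q hq0 hP3 n]
      refine Finset.sum_nbij' (fun j => (j + n).toNat) (fun m => (m:ℤ) - n)
        ?_ ?_ ?_ ?_ ?_
      · intro j hj
        rw [Finset.mem_Icc] at hj
        rw [Finset.mem_range]; omega
      · intro m hm
        rw [Finset.mem_range] at hm
        rw [Finset.mem_Icc]; omega
      · intro j hj; rw [Finset.mem_Icc] at hj; omega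
      · intro m hm; rw [Finset.mem_range] at hm; omega
      · intro j hj
        rw [Finset.mem_Icc] at hj
        have hja : j.natAbs ≤ n := by omega
        rw [hF]
        simp only
        rw [if_pos hja]
        have e1 : (((j+n).toNat : ℕ) : ℤ) - n = j := by omega
        rw [e1, hsign j n hja]
    have hpoint : ∀ j : ℤ, Tendsto (fun n => F n j) atTop (𝓝 (g j)) := by
      intro j
      have hc := coef_tendsto hq3 j
      have h2 : Tendsto (fun n : ℕ =>
          (-1:ℂ)^j * (Pp (q^3) n * Bb (q^3) (2*n) ((j+n).toNat)) * q^(pe j))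
          atTop (𝓝 ((-1:ℂ)^j * 1 * q^(pe j))) := (hc.const_mul _).mul_const _
      rw [mul_one] at h2
      refine Tendsto.congr' ?_ h2
      filter_upwards [eventually_ge_atTop j.natAbs] with n hn
      rw [hF]; simp only; rw [if_pos hn]
    have hbound : ∀ (n : ℕ) (j : ℤ), ‖F n j‖ ≤ C * ‖q‖^(j.natAbs) := by
      intro n j
      rw [hF]; simp only
      by_cases hj : j.natAbs ≤ n
      · rw [if_pos hj, norm_mul, norm_mul]
        have e1 : ‖(-1:ℂ)^j‖ = 1 := by
          rw [norm_zpow]; norm_num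
        have e2 : ‖q ^ pe j‖ ≤ ‖q‖^(j.natAbs) := by
          rw [norm_zpow]
          have hd : pe j = ((j.natAbs : ℤ)) + (((pe j - j.natAbs).toNat : ℕ) : ℤ) := by
            have := natAbs_le_pe j; omega
          rw [hd, zpow_add₀ (ne_of_gt hqpos), zpow_natCast, zpow_natCast]
          have : ‖q‖ ^ (pe j - (j.natAbs:ℤ)).toNat ≤ 1 :=
            pow_le_one₀ (norm_nonneg q) hq.le
          nlinarith [pow_nonneg (norm_nonneg q) j.natAbs,
            pow_nonneg (norm_nonneg q) (pe j - (j.natAbs:ℤ)).toNat]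
        rw [e1, one_mul]
        have hcb := coef_bound hq3 n (2*n) ((j+n).toNat)
        exact mul_le_mul hcb e2 (norm_nonneg _) hCpos.le
      · rw [if_neg hj, norm_zero]
        exact mul_nonneg hCpos.le (pow_nonneg (norm_nonneg q) _)
    have hbsum : Summable (fun j : ℤ => C * ‖q‖^(j.natAbs)) := by
      refine Summable.mul_left _ ?_
      refine Summable.of_nat_of_neg ?_ ?_
      · exact (summable_geometric_of_lt_one (norm_nonneg q) hq).congr
          (fun n => by simp)
      · exact (summable_geometric_of_lt_one (norm_nonneg q) hq).congr
          (fun n => by simp)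
    have h2 : Tendsto (fun n => ∑' j : ℤ, F n j) atTop (𝓝 (∑' j : ℤ, g j)) :=
      tendsto_tsum_of_dominated_convergence hbsum hpoint
        (Eventually.of_forall hbound)
    have h3 : Tendsto (fun n : ℕ => Pp q (3*n)) atTop (𝓝 (E q)) := by
      have t3 : Tendsto (fun n : ℕ => 3*n) atTop atTop :=
        tendsto_atTop.2 fun b => eventually_atTop.2 ⟨b, fun n hn => by omega⟩
      exact (tendsto_Pp hq).comp t3
    have hEg : E q = ∑' j : ℤ, g j := by
      refine tendsto_nhds_unique h3 ?_
      exact Tendsto.congr h1 h2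
    rw [hEg]
    have hEq := Equiv.tsum_eq (Equiv.neg ℤ) (fun n : ℤ => (-1:ℂ)^n * q^(n*(3*n-1)/2))
    rw [← hEq]
    refine tsum_congr fun j => ?_
    have hexp : (Equiv.neg ℤ j) * (3 * (Equiv.neg ℤ j) - 1)/2 = pe j := by
      rw [pe]
      have : (Equiv.neg ℤ j) = -j := rfl
      rw [this]; congr 1; ring
    have hsgn : ((-1:ℂ))^(Equiv.neg ℤ j) = ((-1:ℂ))^j := by
      have hzz : (Equiv.neg ℤ j) = -j := rfl
      rw [hzz, zpow_neg]
      have hsq : ((-1:ℂ))^j * ((-1:ℂ))^j = 1 := by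
        rw [← zpow_add₀ (by norm_num : (-1:ℂ) ≠ 0)]
        have : j + j = 2*j := by ring
        rw [this, zpow_mul]; norm_num
      exact inv_eq_of_mul_eq_one_left hsq
    rw [hg]
    simp only
    rw [hexp, hsgn]
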